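/- Majorana weight of the logical operators of the five-qubit code exceeds two: with |0̄⟩ and |1̄⟩ the logical code states of the five-qubit code, one has ⟨0̄, γ_j 1̄⟩ = 0 for every 1 ≤ j ≤ 10 and ⟨0̄, γ_j γ_k 1̄⟩ = 0 for all 1 ≤ j,k ≤ 10; moreover there exist indices j < k < l in {1,…,10} with ⟨0̄, γ_j γ_k γ_l 1̄⟩ ≠ 0, so at least three Majorana operators are needed to map one logical state to the other. -/

import Mathlib

open Complex Matrix

noncomputable section

/-- Computational basis labels for `L` qubits: bit strings `b : Fin L → Fin 2`. -/
abbrev QBasis (L : ℕ) := Fin L → Fin 2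

/-- State vectors of `L` qubits (the Hilbert space `H_L = (ℂ²)^{⊗L}`
in its computational basis coordinates). -/
abbrev QVec (L : ℕ) := QBasis L → ℂ

/-- Operators on `L` qubits, written as matrices in the computational basis. -/
abbrev QOp (L : ℕ) := Matrix (QBasis L) (QBasis L) ℂ

/-- The inner product `⟨φ, ψ⟩`, conjugate-linear in the first argument. -/
def qInner {L : ℕ} (φ ψ : QVec L) : ℂ := ∑ b, (starRingEnd ℂ) (φ b) * ψ b

/-- `+1` for bit `0`, `-1` for bit `1`. -/
def bitSign (x : Fin 2) : ℂ := if x = 0 then 1 else -1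

/-- Flip the `k`-th bit of a bit string. -/
def flipBit {L : ℕ} (k : Fin L) (b : QBasis L) : QBasis L :=
  Function.update b k (1 - b k)

/-- Pauli `X` on the (1-based) site `k`; the identity if `k` is out of range. -/
def siteX (L : ℕ) (k : ℕ) : QOp L :=
  if h : 1 ≤ k ∧ k ≤ L then
    Matrix.of fun b c => if c = flipBit ⟨k - 1, by omega⟩ b then 1 else 0
  else 1

/-- Pauli `Y` on the (1-based) site `k`; the identity if `k` is out of range. -/
def siteY (L : ℕ) (k : ℕ) : QOp L :=
  if h : 1 ≤ k ∧ k ≤ L then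
    Matrix.of fun b c =>
      if c = flipBit ⟨k - 1, by omega⟩ b then -Complex.I * bitSign (b ⟨k - 1, by omega⟩)
      else 0
  else 1

/-- Pauli `Z` on the (1-based) site `k`; the identity if `k` is out of range. -/
def siteZ (L : ℕ) (k : ℕ) : QOp L :=
  if h : 1 ≤ k ∧ k ≤ L then
    Matrix.diagonal fun b => bitSign (b ⟨k - 1, by omega⟩)
  else 1

/-- The ordered operator product `f 1 * f 2 * ⋯ * f n`. -/
def opProd (L : ℕ) (f : ℕ → QOp L) (n : ℕ) : QOp L :=
  ((List.range n).map fun i => f (i + 1)).prod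

/-- The Jordan–Wigner Majorana operator `γ_m` (1-based, `1 ≤ m ≤ 2L`):
`γ_{2k-1} = Z_1 ⋯ Z_{k-1} X_k` and `γ_{2k} = Z_1 ⋯ Z_{k-1} Y_k`. -/
def majorana (L : ℕ) (m : ℕ) : QOp L :=
  opProd L (siteZ L) ((m + 1) / 2 - 1) *
    (if m % 2 = 1 then siteX L ((m + 1) / 2) else siteY L ((m + 1) / 2))

/-- The total parity operator `P = Z_1 Z_2 ⋯ Z_L`. -/
def totalParity (L : ℕ) : QOp L := opProd L (siteZ L) L


/-- Site index taken modulo 5 with representatives in `{1, …, 5}`. -/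
def idx5 (m : ℕ) : ℕ := (m - 1) % 5 + 1

/-- The stabilizer generators `S_k = X_k Z_{k+1} Z_{k+2} X_{k+3}` of the `[[5,1,3]]`
code, site indices modulo 5 with representatives in `{1, …, 5}`. -/
def stab5 (k : ℕ) : QOp 5 :=
  siteX 5 (idx5 k) * siteZ 5 (idx5 (k + 1)) * siteZ 5 (idx5 (k + 2)) *
    siteX 5 (idx5 (k + 3))

/-- The code space of the five-qubit code: the joint `+1` eigenspace of
`S_1, S_2, S_3, S_4`. -/
def codeSpace5 : Submodule ℂ (QVec 5) :=
  ⨅ k ∈ Finset.Icc 1 4, LinearMap.ker ((stab5 k).mulVecLin - LinearMap.id)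
namespace FQ

@[simp] lemma bitSign_zero : bitSign 0 = 1 := rfl
@[simp] lemma bitSign_one : bitSign 1 = -1 := rfl

/-- sign `∏_k bitSign (b k) ^ (z k)` picked up by a `Z`-string `z` on basis state `b`. -/
def zsgn (z b : QBasis 5) : ℂ := ∏ k, bitSign (b k) ^ ((z k : ℕ))

/-- Pauli string in normal form `Z^z X^x`. -/
def pauli (x z : QBasis 5) : QOp 5 :=
  Matrix.of fun b c => if c = b + x then zsgn z b else 0

def m2 (z b : QBasis 5) : ℕ := ∑ k, (z k : ℕ) * (b k : ℕ)

def izsgn (z b : QBasis 5) : ℤ := if m2 z b % 2 = 0 then 1 else -1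

lemma bpow (u v : Fin 2) : bitSign v ^ ((u : ℕ)) = (-1 : ℂ) ^ ((u : ℕ) * (v : ℕ)) := by
  fin_cases u <;> fin_cases v <;> norm_num [bitSign]

lemma bpow_add (u u' v : Fin 2) :
    bitSign v ^ (((u + u' : Fin 2)) : ℕ) = bitSign v ^ ((u : ℕ)) * bitSign v ^ ((u' : ℕ)) := by
  fin_cases u <;> fin_cases u' <;> fin_cases v <;>
    norm_num [bitSign, show ((1 + 1 : Fin 2) : ℕ) = 0 from rfl, show ((2 : Fin 2) : ℕ) = 0 from rfl]

lemma bitSign_add (u v : Fin 2) : bitSign (u + v) = bitSign u * bitSign v := by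
  fin_cases u <;> fin_cases v <;> norm_num [bitSign, show (1 + 1 : Fin 2) = 0 from rfl, show (2 : Fin 2) = 0 from rfl]

lemma zsgn_eq (z b : QBasis 5) : zsgn z b = ((izsgn z b : ℤ) : ℂ) := by
  have h1 : zsgn z b = (-1 : ℂ) ^ (m2 z b) := by
    rw [zsgn, m2, ← Finset.prod_pow_eq_pow_sum]
    exact Finset.prod_congr rfl fun k _ => bpow (z k) (b k)
  rw [h1, izsgn]
  rcases Nat.even_or_odd (m2 z b) with h | h
  · rw [if_pos (Nat.even_iff.mp h), h.neg_one_pow]; norm_num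
  · have h2 := Nat.odd_iff.mp h
    rw [if_neg (by omega), h.neg_one_pow]; norm_num

lemma zsgn_add_left (z z' b : QBasis 5) : zsgn (z + z') b = zsgn z b * zsgn z' b := by
  rw [zsgn, zsgn, zsgn, ← Finset.prod_mul_distrib]
  exact Finset.prod_congr rfl fun k _ => bpow_add (z k) (z' k) (b k)

lemma zsgn_add_right (z b x : QBasis 5) : zsgn z (b + x) = zsgn z b * zsgn z x := by
  rw [zsgn, zsgn, zsgn, ← Finset.prod_mul_distrib]
  refine Finset.prod_congr rfl fun k _ => ?_
  show bitSign (b k + x k) ^ _ = _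
  rw [bitSign_add, mul_pow]

@[simp] lemma zsgn_zero_left (b : QBasis 5) : zsgn 0 b = 1 := by
  simp [zsgn]

@[simp] lemma zsgn_zero_right (z : QBasis 5) : zsgn z 0 = 1 := by
  simp [zsgn]

lemma pauli_mul (x z x' z' : QBasis 5) :
    pauli x z * pauli x' z' = zsgn z' x • pauli (x + x') (z + z') := by
  ext b c
  rw [Matrix.mul_apply]
  simp only [pauli, Matrix.of_apply, Matrix.smul_apply, smul_eq_mul]
  rw [Finset.sum_eq_single (b + x)]
  · rw [if_pos rfl, ← add_assoc]
    by_cases h : c = b + x + x'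
    · rw [if_pos h, if_pos h, zsgn_add_right, zsgn_add_left]; ring
    · rw [if_neg h, if_neg h, mul_zero, mul_zero]
  · intro d _ hd
    rw [if_neg hd, zero_mul]
  · intro h; exact absurd (Finset.mem_univ _) h

lemma pauli_mulVec (x z : QBasis 5) (ψ : QVec 5) (b : QBasis 5) :
    (pauli x z *ᵥ ψ) b = zsgn z b * ψ (b + x) := by
  rw [Matrix.mulVec, dotProduct]
  simp only [pauli, Matrix.of_apply]
  rw [Finset.sum_eq_single (b + x)]
  · rw [if_pos rfl]
  · intro d _ hd; rw [if_neg hd, zero_mul]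
  · intro h; exact absurd (Finset.mem_univ _) h

lemma pauli_zero : pauli 0 0 = (1 : QOp 5) := by
  ext b c
  simp only [pauli, Matrix.of_apply, add_zero, zsgn_zero_left, Matrix.one_apply, eq_comm]

def eA (k : Fin 5) : QBasis 5 := fun i => if i = k then 1 else 0

lemma zsgn_eA (k : Fin 5) (b : QBasis 5) : zsgn (eA k) b = bitSign (b k) := by
  rw [zsgn]
  rw [Finset.prod_eq_single k]
  · simp [eA]
  · intro i _ hi; simp [eA, hi]
  · intro h; exact absurd (Finset.mem_univ _) h

lemma flip_eq (k : Fin 5) (b : QBasis 5) : flipBit k b = b + eA k := by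
  funext i
  by_cases h : i = k
  · subst h
    show Function.update b i (1 - b i) i = b i + eA i i
    rw [Function.update_self]
    simp only [eA, if_pos rfl]
    exact (by decide : ∀ u : Fin 2, 1 - u = u + 1) (b i)
  · show Function.update b k (1 - b k) i = b i + eA k i
    rw [Function.update_of_ne h]
    simp [eA, h]

lemma fin5_mk (k : Fin 5) : (⟨k.val + 1 - 1, by omega⟩ : Fin 5) = k := by
  apply Fin.ext; simp

lemma siteX_eq (k : Fin 5) : siteX 5 (k.val + 1) = pauli (eA k) 0 := by
  rw [siteX, dif_pos (⟨by omega, by omega⟩ : 1 ≤ k.val + 1 ∧ k.val + 1 ≤ 5)]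
  ext b c
  simp only [Matrix.of_apply]
  rw [fin5_mk k, flip_eq]
  simp [pauli]

lemma siteY_eq (k : Fin 5) : siteY 5 (k.val + 1) = (-Complex.I) • pauli (eA k) (eA k) := by
  rw [siteY, dif_pos (⟨by omega, by omega⟩ : 1 ≤ k.val + 1 ∧ k.val + 1 ≤ 5)]
  ext b c
  simp only [Matrix.of_apply, Matrix.smul_apply, pauli, zsgn_eA, smul_eq_mul]
  rw [fin5_mk k, flip_eq]
  by_cases h : c = b + eA k
  · rw [if_pos h, if_pos h]
  · rw [if_neg h, if_neg h, mul_zero]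

lemma siteZ_eq (k : Fin 5) : siteZ 5 (k.val + 1) = pauli 0 (eA k) := by
  rw [siteZ, dif_pos (⟨by omega, by omega⟩ : 1 ≤ k.val + 1 ∧ k.val + 1 ≤ 5)]
  ext b c
  rw [fin5_mk k]
  simp only [Matrix.diagonal_apply, pauli, Matrix.of_apply, zsgn_eA, add_zero]
  by_cases h : b = c
  · subst h; simp
  · rw [if_neg h, if_neg (fun hc => h hc.symm)]

def zlt (n : ℕ) : QBasis 5 := fun i => if (i : ℕ) < n then 1 else 0

lemma opProd_succ (f : ℕ → QOp 5) (n : ℕ) :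
    opProd 5 f (n + 1) = opProd 5 f n * f (n + 1) := by
  rw [opProd, opProd, List.range_succ, List.map_append, List.prod_append]
  simp

lemma opProdZ : ∀ n, n ≤ 5 → opProd 5 (siteZ 5) n = pauli 0 (zlt n) := by
  intro n
  induction n with
  | zero =>
    intro _
    rw [opProd]
    simp only [List.range_zero, List.map_nil, List.prod_nil]
    rw [show zlt 0 = 0 by funext i; simp [zlt]]
    exact pauli_zero.symm
  | succ n ih =>
    intro h
    rw [opProd_succ, ih (by omega),
      show (n + 1 : ℕ) = ((⟨n, by omega⟩ : Fin 5) : ℕ) + 1 from rfl,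
      siteZ_eq, pauli_mul, zsgn_zero_right, one_smul, add_zero]
    have hz : zlt n + eA ⟨n, by omega⟩ = zlt (n + 1) := by
      funext i
      simp only [zlt, eA, Pi.add_apply]
      rcases lt_trichotomy (i : ℕ) n with h1 | h1 | h1
      · rw [if_pos h1, if_neg (by simp [Fin.ext_iff]; omega), if_pos (by omega)]; decide
      · rw [if_neg (by omega), if_pos (by simp [Fin.ext_iff]; omega), if_pos (by omega)]; decide
      · rw [if_neg (by omega), if_neg (by simp [Fin.ext_iff]; omega), if_neg (by omega)]; decide
    rw [hz]

def allOne : QBasis 5 := fun _ => 1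

lemma totalParity_eq : totalParity 5 = pauli 0 allOne := by
  rw [totalParity, opProdZ 5 (by norm_num)]
  have hz : zlt 5 = allOne := by
    funext i
    simp [zlt, allOne, i.isLt]
  rw [hz]

def majX (m : ℕ) : QBasis 5 := fun i => if (i : ℕ) + 1 = (m + 1) / 2 then 1 else 0

def majZ (m : ℕ) : QBasis 5 :=
  fun i => if ((i : ℕ) + 1 < (m + 1) / 2 ∨ (m % 2 = 0 ∧ (i : ℕ) + 1 = (m + 1) / 2))
    then 1 else 0

lemma pauli_mul' {x z x' z' : QBasis 5} (h : izsgn z' x = 1) :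
    pauli x z * pauli x' z' = pauli (x + x') (z + z') := by
  rw [pauli_mul, zsgn_eq, h]
  norm_num

lemma spmul (c c' : ℂ) (x z x' z' : QBasis 5) :
    (c • pauli x z) * (c' • pauli x' z') =
      (c * c' * ((izsgn z' x : ℤ) : ℂ)) • pauli (x + x') (z + z') := by
  rw [smul_mul_assoc, mul_smul_comm, pauli_mul, zsgn_eq, smul_smul, smul_smul, mul_assoc]

lemma maj_eq : ∀ m : ℕ, 1 ≤ m → m ≤ 10 →
    majorana 5 m = (if m % 2 = 1 then (1 : ℂ) else -Complex.I) • pauli (majX m) (majZ m) := by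
  intro m h1 h2
  interval_cases m
  · rw [majorana]
    norm_num
    rw [opProdZ 0 (by norm_num),
      show siteX 5 1 = pauli (eA ⟨0, by norm_num⟩) 0 from siteX_eq ⟨0, by norm_num⟩,
      pauli_mul' (by decide), zero_add, add_zero,
      show zlt 0 = majZ 1 from by decide,
      show eA ⟨0, by norm_num⟩ = majX 1 from by decide]
  · rw [majorana]
    norm_num
    rw [opProdZ 0 (by norm_num),
      show siteY 5 1 = (-Complex.I) • pauli (eA ⟨0, by norm_num⟩) (eA ⟨0, by norm_num⟩)
        from siteY_eq ⟨0, by norm_num⟩,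
      mul_smul_comm, pauli_mul' (by decide), zero_add,
      show zlt 0 + eA ⟨0, by norm_num⟩ = majZ 2 from by decide,
      show eA ⟨0, by norm_num⟩ = majX 2 from by decide, neg_smul]
  · rw [majorana]
    norm_num
    rw [opProdZ 1 (by norm_num),
      show siteX 5 2 = pauli (eA ⟨1, by norm_num⟩) 0 from siteX_eq ⟨1, by norm_num⟩,
      pauli_mul' (by decide), zero_add, add_zero,
      show zlt 1 = majZ 3 from by decide,
      show eA ⟨1, by norm_num⟩ = majX 3 from by decide]
  · rw [majorana]
    norm_num
    rw [opProdZ 1 (by norm_num),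
      show siteY 5 2 = (-Complex.I) • pauli (eA ⟨1, by norm_num⟩) (eA ⟨1, by norm_num⟩)
        from siteY_eq ⟨1, by norm_num⟩,
      mul_smul_comm, pauli_mul' (by decide), zero_add,
      show zlt 1 + eA ⟨1, by norm_num⟩ = majZ 4 from by decide,
      show eA ⟨1, by norm_num⟩ = majX 4 from by decide, neg_smul]
  · rw [majorana]
    norm_num
    rw [opProdZ 2 (by norm_num),
      show siteX 5 3 = pauli (eA ⟨2, by norm_num⟩) 0 from siteX_eq ⟨2, by norm_num⟩,
      pauli_mul' (by decide), zero_add, add_zero,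
      show zlt 2 = majZ 5 from by decide,
      show eA ⟨2, by norm_num⟩ = majX 5 from by decide]
  · rw [majorana]
    norm_num
    rw [opProdZ 2 (by norm_num),
      show siteY 5 3 = (-Complex.I) • pauli (eA ⟨2, by norm_num⟩) (eA ⟨2, by norm_num⟩)
        from siteY_eq ⟨2, by norm_num⟩,
      mul_smul_comm, pauli_mul' (by decide), zero_add,
      show zlt 2 + eA ⟨2, by norm_num⟩ = majZ 6 from by decide,
      show eA ⟨2, by norm_num⟩ = majX 6 from by decide, neg_smul]
  · rw [majorana]
    norm_num
    rw [opProdZ 3 (by norm_num),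
      show siteX 5 4 = pauli (eA ⟨3, by norm_num⟩) 0 from siteX_eq ⟨3, by norm_num⟩,
      pauli_mul' (by decide), zero_add, add_zero,
      show zlt 3 = majZ 7 from by decide,
      show eA ⟨3, by norm_num⟩ = majX 7 from by decide]
  · rw [majorana]
    norm_num
    rw [opProdZ 3 (by norm_num),
      show siteY 5 4 = (-Complex.I) • pauli (eA ⟨3, by norm_num⟩) (eA ⟨3, by norm_num⟩)
        from siteY_eq ⟨3, by norm_num⟩,
      mul_smul_comm, pauli_mul' (by decide), zero_add,
      show zlt 3 + eA ⟨3, by norm_num⟩ = majZ 8 from by decide,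
      show eA ⟨3, by norm_num⟩ = majX 8 from by decide, neg_smul]
  · rw [majorana]
    norm_num
    rw [opProdZ 4 (by norm_num),
      show siteX 5 5 = pauli (eA ⟨4, by norm_num⟩) 0 from siteX_eq ⟨4, by norm_num⟩,
      pauli_mul' (by decide), zero_add, add_zero,
      show zlt 4 = majZ 9 from by decide,
      show eA ⟨4, by norm_num⟩ = majX 9 from by decide]
  · rw [majorana]
    norm_num
    rw [opProdZ 4 (by norm_num),
      show siteY 5 5 = (-Complex.I) • pauli (eA ⟨4, by norm_num⟩) (eA ⟨4, by norm_num⟩)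
        from siteY_eq ⟨4, by norm_num⟩,
      mul_smul_comm, pauli_mul' (by decide), zero_add,
      show zlt 4 + eA ⟨4, by norm_num⟩ = majZ 10 from by decide,
      show eA ⟨4, by norm_num⟩ = majX 10 from by decide, neg_smul]

def stX : ℕ → QBasis 5
  | 1 => ![1,0,0,1,0]
  | 2 => ![0,1,0,0,1]
  | 3 => ![1,0,1,0,0]
  | 4 => ![0,1,0,1,0]
  | _ => 0

def stZ : ℕ → QBasis 5
  | 1 => ![0,1,1,0,0]
  | 2 => ![0,0,1,1,0]
  | 3 => ![0,0,0,1,1]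
  | 4 => ![1,0,0,0,1]
  | _ => 0

lemma stab_eq : ∀ k ∈ Finset.Icc 1 4, stab5 k = pauli (stX k) (stZ k) := by
  intro k hk
  rw [Finset.mem_Icc] at hk
  obtain ⟨hk1, hk2⟩ := hk
  interval_cases k
  · rw [stab5]
    norm_num [idx5]
    rw [show siteX 5 1 = pauli (eA ⟨0, by norm_num⟩) 0 from siteX_eq ⟨0, by norm_num⟩,
      show siteZ 5 2 = pauli 0 (eA ⟨1, by norm_num⟩) from siteZ_eq ⟨1, by norm_num⟩,
      show siteZ 5 3 = pauli 0 (eA ⟨2, by norm_num⟩) from siteZ_eq ⟨2, by norm_num⟩,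
      show siteX 5 4 = pauli (eA ⟨3, by norm_num⟩) 0 from siteX_eq ⟨3, by norm_num⟩,
      pauli_mul' (by decide), pauli_mul' (by decide), pauli_mul' (by decide),
      show eA ⟨0, by norm_num⟩ + 0 + 0 + eA ⟨3, by norm_num⟩ = stX 1 from by decide,
      show (0 : QBasis 5) + eA ⟨1, by norm_num⟩ + eA ⟨2, by norm_num⟩ + 0 = stZ 1
        from by decide]
  · rw [stab5]
    norm_num [idx5]
    rw [show siteX 5 2 = pauli (eA ⟨1, by norm_num⟩) 0 from siteX_eq ⟨1, by norm_num⟩,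
      show siteZ 5 3 = pauli 0 (eA ⟨2, by norm_num⟩) from siteZ_eq ⟨2, by norm_num⟩,
      show siteZ 5 4 = pauli 0 (eA ⟨3, by norm_num⟩) from siteZ_eq ⟨3, by norm_num⟩,
      show siteX 5 5 = pauli (eA ⟨4, by norm_num⟩) 0 from siteX_eq ⟨4, by norm_num⟩,
      pauli_mul' (by decide), pauli_mul' (by decide), pauli_mul' (by decide),
      show eA ⟨1, by norm_num⟩ + 0 + 0 + eA ⟨4, by norm_num⟩ = stX 2 from by decide,
      show (0 : QBasis 5) + eA ⟨2, by norm_num⟩ + eA ⟨3, by norm_num⟩ + 0 = stZ 2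
        from by decide]
  · rw [stab5]
    norm_num [idx5]
    rw [show siteX 5 3 = pauli (eA ⟨2, by norm_num⟩) 0 from siteX_eq ⟨2, by norm_num⟩,
      show siteZ 5 4 = pauli 0 (eA ⟨3, by norm_num⟩) from siteZ_eq ⟨3, by norm_num⟩,
      show siteZ 5 5 = pauli 0 (eA ⟨4, by norm_num⟩) from siteZ_eq ⟨4, by norm_num⟩,
      show siteX 5 1 = pauli (eA ⟨0, by norm_num⟩) 0 from siteX_eq ⟨0, by norm_num⟩,
      pauli_mul' (by decide), pauli_mul' (by decide), pauli_mul' (by decide),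
      show eA ⟨2, by norm_num⟩ + 0 + 0 + eA ⟨0, by norm_num⟩ = stX 3 from by decide,
      show (0 : QBasis 5) + eA ⟨3, by norm_num⟩ + eA ⟨4, by norm_num⟩ + 0 = stZ 3
        from by decide]
  · rw [stab5]
    norm_num [idx5]
    rw [show siteX 5 4 = pauli (eA ⟨3, by norm_num⟩) 0 from siteX_eq ⟨3, by norm_num⟩,
      show siteZ 5 5 = pauli 0 (eA ⟨4, by norm_num⟩) from siteZ_eq ⟨4, by norm_num⟩,
      show siteZ 5 1 = pauli 0 (eA ⟨0, by norm_num⟩) from siteZ_eq ⟨0, by norm_num⟩,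
      show siteX 5 2 = pauli (eA ⟨1, by norm_num⟩) 0 from siteX_eq ⟨1, by norm_num⟩,
      pauli_mul' (by decide), pauli_mul' (by decide), pauli_mul' (by decide),
      show eA ⟨3, by norm_num⟩ + 0 + 0 + eA ⟨1, by norm_num⟩ = stX 4 from by decide,
      show (0 : QBasis 5) + eA ⟨4, by norm_num⟩ + eA ⟨0, by norm_num⟩ + 0 = stZ 4
        from by decide]

def stXl (l : List ℕ) : QBasis 5 := (l.map stX).sum

def chainSgn : List ℕ → QBasis 5 → ℤ
  | [], _ => 1
  | k :: l, b => izsgn (stZ k) b * chainSgn l (b + stX k)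

def subsetOf (b : QBasis 5) : List ℕ :=
  (if b 0 + b 2 = 1 then [1] else []) ++ (if b 4 = 1 then [2] else []) ++
    (if b 2 = 1 then [3] else []) ++ (if b 1 + b 4 = 1 then [4] else [])

def par (b : QBasis 5) : ℕ := ∑ k, (b k : ℕ)

def s0 (b : QBasis 5) : ℤ := if par b % 2 = 1 then 0 else chainSgn (subsetOf b) b

def s1 (b : QBasis 5) : ℤ :=
  if par b % 2 = 0 then 0 else chainSgn (subsetOf (b + eA 0)) b

def Nval (x z : QBasis 5) : ℤ := ∑ b, s0 b * izsgn z b * s1 (b + x)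


lemma stXl_cons (k : ℕ) (l : List ℕ) : stXl (k :: l) = stX k + stXl l := by
  simp [stXl]

lemma izsgn_cast_ne (z b : QBasis 5) : ((izsgn z b : ℤ) : ℂ) ≠ 0 := by
  rw [izsgn]; split <;> norm_num


set_option maxHeartbeats 1000000 in
lemma dec_odd0 : ∀ b : QBasis 5, par b % 2 = 1 → izsgn allOne b = -1 := by decide

set_option maxHeartbeats 1000000 in
lemma dec_even1 : ∀ b : QBasis 5, par b % 2 = 0 → izsgn allOne b = 1 := by decide

set_option maxHeartbeats 1000000 in
lemma dec_sub0 : ∀ b : QBasis 5, ∀ k ∈ subsetOf b, k ∈ Finset.Icc 1 4 := by decide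

set_option maxHeartbeats 1000000 in
lemma dec_sub1 : ∀ b : QBasis 5, ∀ k ∈ subsetOf (b + eA 0), k ∈ Finset.Icc 1 4 := by decide

set_option maxHeartbeats 1000000 in
lemma dec_x0 : ∀ b : QBasis 5, ¬(par b % 2 = 1) → b + stXl (subsetOf b) = 0 := by decide

set_option maxHeartbeats 1000000 in
lemma dec_x1 : ∀ b : QBasis 5, ¬(par b % 2 = 0) →
    b + stXl (subsetOf (b + eA 0)) = eA 0 := by decide

set_option maxHeartbeats 1000000 in
lemma dec_N1 : ∀ j ∈ Finset.Icc 1 10, Nval (majX j) (majZ j) = 0 := by decide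

set_option maxHeartbeats 4000000 in
lemma dec_N2 : ∀ j ∈ Finset.Icc 1 10, ∀ k ∈ Finset.Icc 1 10,
    Nval (majX j + majX k) (majZ j + majZ k) = 0 := by decide

set_option maxHeartbeats 1000000 in
lemma dec_N3 : Nval (majX 1 + majX 3 + majX 5) (majZ 1 + majZ 3 + majZ 5) = 16 := by
  decide

end FQ

/-- the Majorana weight between the logical code states of the
five-qubit code exceeds two: `⟨0̄, γ_j 1̄⟩ = 0` and `⟨0̄, γ_j γ_k 1̄⟩ = 0` for all
Majorana indices, while some triple product `γ_j γ_k γ_l` has nonzero matrix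
element between the two logical states. -/
theorem five_qubit_logical_majorana_weight (ψ0 ψ1 : QVec 5)
    (h0C : ∀ k ∈ Finset.Icc 1 4, stab5 k *ᵥ ψ0 = ψ0)
    (h1C : ∀ k ∈ Finset.Icc 1 4, stab5 k *ᵥ ψ1 = ψ1)
    (h0n : qInner ψ0 ψ0 = 1) (h1n : qInner ψ1 ψ1 = 1)
    (h0P : totalParity 5 *ᵥ ψ0 = ψ0)
    (h1P : totalParity 5 *ᵥ ψ1 = -ψ1) :
    (∀ j : ℕ, 1 ≤ j → j ≤ 10 → qInner ψ0 (majorana 5 j *ᵥ ψ1) = 0) ∧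
    (∀ j k : ℕ, 1 ≤ j → j ≤ 10 → 1 ≤ k → k ≤ 10 →
      qInner ψ0 ((majorana 5 j * majorana 5 k) *ᵥ ψ1) = 0) ∧
    (∃ j k l : ℕ, 1 ≤ j ∧ j < k ∧ k < l ∧ l ≤ 10 ∧
      qInner ψ0 ((majorana 5 j * majorana 5 k * majorana 5 l) *ᵥ ψ1) ≠ 0) := by
  classical
  -- entrywise consequence of a chain of stabilizer relations
  have hrel : ∀ (ψ : QVec 5), (∀ k ∈ Finset.Icc 1 4, stab5 k *ᵥ ψ = ψ) →
      ∀ l : List ℕ, (∀ k ∈ l, k ∈ Finset.Icc 1 4) →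
      ∀ b, ψ b = ((FQ.chainSgn l b : ℤ) : ℂ) * ψ (b + FQ.stXl l) := by
    intro ψ hψ l
    induction l with
    | nil =>
      intro _ b
      simp [FQ.chainSgn, FQ.stXl]
    | cons k l ih =>
      intro hkl b
      have hk := hkl k List.mem_cons_self
      have h1 : ψ b = FQ.zsgn (FQ.stZ k) b * ψ (b + FQ.stX k) := by
        conv_lhs => rw [← hψ k hk]
        rw [FQ.stab_eq k hk, FQ.pauli_mulVec]
      rw [h1, ih (fun k' hk' => hkl k' (List.mem_cons_of_mem _ hk')) (b + FQ.stX k),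
        FQ.zsgn_eq, FQ.stXl_cons, ← add_assoc]
      show _ = ((FQ.izsgn (FQ.stZ k) b * FQ.chainSgn l (b + FQ.stX k) : ℤ) : ℂ) * _
      push_cast
      ring
  have hA0 : ∀ b, ψ0 b = ((FQ.s0 b : ℤ) : ℂ) * ψ0 0 := by
    intro b
    by_cases hp : FQ.par b % 2 = 1
    · have hsg : FQ.izsgn FQ.allOne b = -1 := FQ.dec_odd0 b hp
      have h := congrFun h0P b
      rw [FQ.totalParity_eq, FQ.pauli_mulVec, add_zero, FQ.zsgn_eq, hsg] at h
      rw [FQ.s0, if_pos hp]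
      push_cast at h ⊢
      linear_combination (-1/2 : ℂ) * h
    · have h := hrel ψ0 h0C (FQ.subsetOf b) (FQ.dec_sub0 b) b
      rw [FQ.dec_x0 b hp] at h
      rw [FQ.s0, if_neg hp]
      exact h
  have hA1 : ∀ b, ψ1 b = ((FQ.s1 b : ℤ) : ℂ) * ψ1 (FQ.eA 0) := by
    intro b
    by_cases hp : FQ.par b % 2 = 0
    · have hsg : FQ.izsgn FQ.allOne b = 1 := FQ.dec_even1 b hp
      have h := congrFun h1P b
      rw [FQ.totalParity_eq, FQ.pauli_mulVec, add_zero, FQ.zsgn_eq, hsg] at h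
      rw [FQ.s1, if_pos hp]
      simp only [Pi.neg_apply] at h
      push_cast at h ⊢
      linear_combination (1/2 : ℂ) * h
    · have h := hrel ψ1 h1C (FQ.subsetOf (b + FQ.eA 0)) (FQ.dec_sub1 b) b
      rw [FQ.dec_x1 b hp] at h
      rw [FQ.s1, if_neg hp]
      exact h
  have hc0 : ψ0 0 ≠ 0 := by
    intro hz
    have hzero : qInner ψ0 ψ0 = 0 := by
      rw [qInner]
      refine Finset.sum_eq_zero fun b _ => ?_
      rw [hA0 b, hz, mul_zero, map_zero, zero_mul]
    have : (1 : ℂ) = 0 := by rw [← h0n]; exact hzero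
    exact one_ne_zero this
  have hc1 : ψ1 (FQ.eA 0) ≠ 0 := by
    intro hz
    have hzero : qInner ψ1 ψ1 = 0 := by
      rw [qInner]
      refine Finset.sum_eq_zero fun b _ => ?_
      rw [hA1 b, hz, mul_zero, map_zero, zero_mul]
    have : (1 : ℂ) = 0 := by rw [← h1n]; exact hzero
    exact one_ne_zero this
  have key : ∀ (c : ℂ) (x z : QBasis 5),
      qInner ψ0 ((c • FQ.pauli x z) *ᵥ ψ1) =
        c * (starRingEnd ℂ) (ψ0 0) * ψ1 (FQ.eA 0) * ((FQ.Nval x z : ℤ) : ℂ) := by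
    intro c x z
    rw [qInner, Matrix.smul_mulVec]
    simp only [Pi.smul_apply, smul_eq_mul, FQ.pauli_mulVec, FQ.Nval]
    push_cast
    rw [Finset.mul_sum]
    refine Finset.sum_congr rfl fun b _ => ?_
    rw [hA0 b, hA1 (b + x), FQ.zsgn_eq]
    simp only [_root_.map_mul, map_intCast]
    ring
  refine ⟨?_, ?_, ?_⟩
  · intro j hj1 hj2
    rw [FQ.maj_eq j hj1 hj2, key]
    have hz : FQ.Nval (FQ.majX j) (FQ.majZ j) = 0 :=
      FQ.dec_N1 j (Finset.mem_Icc.mpr ⟨hj1, hj2⟩)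
    rw [hz]
    push_cast
    ring
  · intro j k hj1 hj2 hk1 hk2
    rw [FQ.maj_eq j hj1 hj2, FQ.maj_eq k hk1 hk2, FQ.spmul, key]
    have hz : FQ.Nval (FQ.majX j + FQ.majX k) (FQ.majZ j + FQ.majZ k) = 0 :=
      FQ.dec_N2 j (Finset.mem_Icc.mpr ⟨hj1, hj2⟩) k (Finset.mem_Icc.mpr ⟨hk1, hk2⟩)
    rw [hz]
    push_cast
    ring
  · refine ⟨1, 3, 5, le_refl 1, by norm_num, by norm_num, by norm_num, ?_⟩
    rw [FQ.maj_eq 1 (by norm_num) (by norm_num), FQ.maj_eq 3 (by norm_num) (by norm_num),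
      FQ.maj_eq 5 (by norm_num) (by norm_num), FQ.spmul, FQ.spmul, key]
    rw [FQ.dec_N3]
    refine mul_ne_zero (mul_ne_zero (mul_ne_zero ?_ ?_) hc1) ?_
    · refine mul_ne_zero (mul_ne_zero (mul_ne_zero (mul_ne_zero ?_ ?_) ?_) ?_) ?_
      · norm_num
      · norm_num
      · exact FQ.izsgn_cast_ne _ _
      · norm_num
      · exact FQ.izsgn_cast_ne _ _
    · intro h
      apply hc0
      have := congrArg (starRingEnd ℂ) h
      simpa using this
    · norm_num

end
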